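/- Let s ∈ ℝ^{n_a}, r ∈ ℝ, and assume it is NOT the case that both r > 0 and max_{1≤i≤n_a} sᵢ ≤ 0. Define ū ∈ ℝ^{n_a} by ūᵢ = m(sᵢ)·r / Σ_{j=1}^{n_a} m(s_j)² if r > 0, and ūᵢ = 0 if r ≤ 0, where m(a) = max{0,a}. Then ū is feasible (ū ≥ 0 componentwise and ⟨s, ū⟩ ≥ r) and ū minimizes (1/2)‖u‖² over the set {u ∈ ℝ^{n_a} : u ≥ 0 componentwise, ⟨s, u⟩ ≥ r}; that is, for every u in this set, ‖ū‖ ≤ ‖u‖. -/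

import Mathlib

open RealInnerProductSpace

/-- closed-form solution of the QP-based controller
(Theorem 2 of the paper): under the non-triggering assumption, the explicit
vector ū is feasible and minimizes (1/2)‖u‖² over the feasible set. -/
theorem stmt6 {n_a : ℕ} (s : EuclideanSpace ℝ (Fin n_a)) (r : ℝ)
    (hnt : ¬ (0 < r ∧ ∀ i, s i ≤ 0))
    (ubar : EuclideanSpace ℝ (Fin n_a))
    (hubar : ∀ i, ubar i =
      if 0 < r then max 0 (s i) * r / ∑ j, (max 0 (s j)) ^ 2 else 0) :
    (∀ i, 0 ≤ ubar i) ∧ r ≤ ⟪s, ubar⟫ ∧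
      ∀ u : EuclideanSpace ℝ (Fin n_a),
        (∀ i, 0 ≤ u i) → r ≤ ⟪s, u⟫ → ‖ubar‖ ≤ ‖u‖ := by
  by_cases hr : 0 < r
  · -- positive case
    obtain ⟨i0, hi0⟩ : ∃ i, 0 < s i := by
      by_contra h
      push_neg at h
      exact hnt ⟨hr, h⟩
    set S : ℝ := ∑ j, (max 0 (s j)) ^ 2 with hSdef
    have hS : 0 < S := by
      apply Finset.sum_pos'
      · intro i _; positivity
      · exact ⟨i0, Finset.mem_univ i0, by
          rw [max_eq_right hi0.le]; positivity⟩
    have hub : ∀ i, ubar i = max 0 (s i) * r / S := by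
      intro i; rw [hubar i, if_pos hr]
    have key : ∀ a : ℝ, a * max 0 a = (max 0 a) ^ 2 := by
      intro a
      rcases le_total a 0 with h | h
      · rw [max_eq_left h]; ring
      · rw [max_eq_right h]; ring
    have hinner : ⟪s, ubar⟫ = r := by
      simp only [PiLp.inner_apply, RCLike.inner_apply, conj_trivial]
      have : ∀ i : Fin n_a, s i * ubar i = (max 0 (s i)) ^ 2 * (r / S) := by
        intro i
        rw [hub i, mul_div_assoc, ← mul_assoc, key (s i)]
      rw [Finset.sum_congr rfl fun i _ => mul_comm (ubar i) (s i)]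
      rw [Finset.sum_congr rfl fun i _ => this i, ← Finset.sum_mul, ← hSdef,
        mul_div_cancel₀ r hS.ne']
    refine ⟨fun i => ?_, hinner.ge, fun u hu hsu => ?_⟩
    · rw [hub i]; positivity
    · have hnn : ⟪ubar, ubar⟫ = r ^ 2 / S := by
        simp only [PiLp.inner_apply, RCLike.inner_apply, conj_trivial]
        have : ∀ i : Fin n_a, ubar i * ubar i = (max 0 (s i)) ^ 2 * (r ^ 2 / S ^ 2) := by
          intro i; rw [hub i]; field_simp
        rw [Finset.sum_congr rfl fun i _ => this i, ← Finset.sum_mul, ← hSdef]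
        field_simp
      have hcs : ⟪ubar, u⟫ ≤ ‖ubar‖ * ‖u‖ := real_inner_le_norm ubar u
      have hlow : r ^ 2 / S ≤ ⟪ubar, u⟫ := by
        simp only [PiLp.inner_apply, RCLike.inner_apply, conj_trivial]
        have h1 : ∀ i : Fin n_a, (r / S) * (s i * u i) ≤ ubar i * u i := by
          intro i
          rw [hub i]
          have : max 0 (s i) * r / S * u i = (r / S) * (max 0 (s i) * u i) := by ring
          rw [this]
          apply mul_le_mul_of_nonneg_left _ (by positivity)
          exact mul_le_mul_of_nonneg_right (le_max_right 0 (s i)) (hu i)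
        calc r ^ 2 / S = (r / S) * r := by field_simp
          _ ≤ (r / S) * ⟪s, u⟫ := by
              apply mul_le_mul_of_nonneg_left hsu (by positivity)
          _ = ∑ i, (r / S) * (s i * u i) := by
              simp only [PiLp.inner_apply, RCLike.inner_apply, conj_trivial,
                Finset.mul_sum]
              exact Finset.sum_congr rfl fun i _ => by ring
          _ ≤ ∑ i, ubar i * u i := Finset.sum_le_sum fun i _ => h1 i
          _ = ∑ i, u i * ubar i := Finset.sum_congr rfl fun i _ => mul_comm _ _
      have hnorm2 : ‖ubar‖ * ‖ubar‖ ≤ ‖ubar‖ * ‖u‖ := by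
        calc ‖ubar‖ * ‖ubar‖ = ⟪ubar, ubar⟫ := (real_inner_self_eq_norm_mul_norm ubar).symm
          _ = r ^ 2 / S := hnn
          _ ≤ ⟪ubar, u⟫ := hlow
          _ ≤ ‖ubar‖ * ‖u‖ := hcs
      rcases eq_or_lt_of_le (norm_nonneg ubar) with h0 | h0
      · rw [← h0]; exact norm_nonneg u
      · exact le_of_mul_le_mul_left hnorm2 h0
  · -- r ≤ 0 case
    have h0 : ubar = 0 := by
      ext i
      simp [hubar i, hr]
    subst h0
    refine ⟨fun i => le_refl 0, ?_, fun u _ _ => by simp⟩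
    simp only [inner_zero_right]
    exact le_of_not_gt hr
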